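/- In any uncountable standard Borel space X there exist disjoint co-analytic sets A₀, A₁ ⊆ X that are Borel-inseparable: there is no Borel set B ⊆ X with A₀ ⊆ B and A₁ ⊆ X \ B. -/

import Mathlib

open Set

namespace Insep

abbrev NN := ℕ → ℕ

def pref (z : NN) (n : ℕ) : List ℕ := (List.range n).map z

@[simp] lemma pref_length (z : NN) (n : ℕ) : (pref z n).length = n := by
  simp [pref]

@[simp] lemma pref_zero (z : NN) : pref z 0 = [] := by simp [pref]

lemma pref_take (z : NN) (m n : ℕ) : (pref z n).take m = pref z (min m n) := by
  simp [pref, ← List.map_take, List.take_range]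

lemma pref_prefix (z : NN) {m n : ℕ} (h : m ≤ n) : pref z m <+: pref z n := by
  have : (pref z n).take m = pref z m := by simp [pref_take, min_eq_left h]
  rw [← this]; exact List.take_prefix _ _

lemma pref_getElem (z : NN) {n k : ℕ} (hk : k < n) :
    (pref z n)[k]'(by simpa using hk) = z k := by
  simp [pref]

/-- a prefix of `pref z n` is some `pref z m`. -/
lemma prefix_pref (z : NN) {n : ℕ} {p : List ℕ} (h : p <+: pref z n) :
    p = pref z p.length := by
  have hl : p.length ≤ n := by simpa using h.length_le
  have h2 : pref z p.length <+: pref z n := pref_prefix z hl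
  have := List.prefix_of_prefix_length_le h h2 (by simp)
  exact this.eq_of_length (by simp)

end Insep

namespace Insep

/-- prefix-closed membership -/
def InT (T : Set (List ℕ)) (s : List ℕ) : Prop := ∀ p, p <+: s → p ∈ T

lemma InT.mono_prefix {T : Set (List ℕ)} {s t : List ℕ} (h : InT T t) (hp : s <+: t) :
    InT T s := fun p hps => h p (hps.trans hp)

def HasBranch (T : Set (List ℕ)) : Prop := ∃ z : NN, ∀ n, pref z n ∈ T

lemma InT_pref {T : Set (List ℕ)} {z : NN} (h : ∀ n, pref z n ∈ T) (n : ℕ) :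
    InT T (pref z n) := by
  intro p hp
  rw [prefix_pref z hp]; exact h _

/-- the relation "strictly extends, within the tree" -/
def below (T : Set (List ℕ)) (a b : List ℕ) : Prop :=
  InT T a ∧ b <+: a ∧ b ≠ a

lemma below_length {T : Set (List ℕ)} {a b : List ℕ} (h : below T a b) :
    b.length < a.length := by
  rcases h with ⟨-, hp, hne⟩
  rcases lt_or_eq_of_le hp.length_le with h | h
  · exact h
  · exact absurd (hp.eq_of_length h) hne

/-- a strictly increasing chain of nodes in the tree yields a branch -/
lemma hasBranch_of_chain {T : Set (List ℕ)} (c : ℕ → List ℕ)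
    (hmono : ∀ n, c n <+: c (n + 1) ∧ c n ≠ c (n + 1))
    (hT : ∀ n, InT T (c n)) : HasBranch T := by
  have hlen : ∀ n, n ≤ (c n).length := by
    intro n
    induction n with
    | zero => exact Nat.zero_le _
    | succ n ih =>
      have : (c n).length < (c (n+1)).length := by
        rcases hmono n with ⟨hp, hne⟩
        exact below_length ⟨hT (n+1), hp, hne⟩
      omega
  have hchain : ∀ {m n : ℕ}, m ≤ n → c m <+: c n := by
    intro m n h
    induction n with
    | zero => simpa [Nat.le_zero.1 h]
    | succ n ih =>
      rcases Nat.lt_or_ge m (n+1) with h' | h'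
      · exact (ih (by omega)).trans (hmono n).1
      · have : m = n + 1 := by omega
        simp [this]
  classical
  refine ⟨fun n => (c (n+1)).getD n 0, fun n => ?_⟩
  have hpre : pref (fun k => (c (k+1)).getD k 0) n = (c n).take n := by
    apply List.ext_getElem
    · simp [hlen n]
    · intro k h1 h2
      have hkn : k < n := by simpa using h1
      rw [pref_getElem _ hkn]
      have hk1 : k < (c (k+1)).length := lt_of_lt_of_le (Nat.lt_succ_self k) (hlen (k+1))
      have hget : (c (k+1)).getD k 0 = (c (k+1))[k]'hk1 := by
        simp [List.getD_eq_getElem, hk1]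
      rw [hget]
      have hcc : c (k+1) <+: c n := hchain (by omega)
      have := hcc.getElem hk1
      simp only [List.getElem_take]
      rw [← this]
  rw [hpre]
  exact hT n _ (List.take_prefix _ _)
end Insep

namespace Insep

lemma acc_of_noBranch {T : Set (List ℕ)} (h : ¬ HasBranch T) (s : List ℕ) :
    Acc (below T) s := by
  classical
  by_contra hs
  -- from a non-accessible node, find a non-accessible strict extension
  have step : ∀ a : List ℕ, ¬ Acc (below T) a →
      ∃ b, below T b a ∧ ¬ Acc (below T) b := by
    intro a ha
    by_contra hcon
    push_neg at hcon
    exact ha (Acc.intro a fun b hb => hcon b hb)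
  choose F hF1 hF2 using step
  -- iterate
  let c : ℕ → {l : List ℕ // ¬ Acc (below T) l} :=
    fun n => Nat.rec ⟨s, hs⟩ (fun _ p => ⟨F p.1 p.2, hF2 p.1 p.2⟩) n
  have hcsucc : ∀ n, (c (n+1)).1 = F (c n).1 (c n).2 := fun n => rfl
  apply h
  refine hasBranch_of_chain (fun n => (c (n+1)).1) (fun n => ?_) (fun n => ?_)
  · show (c (n+1) : List ℕ) <+: (c (n+1+1) : List ℕ) ∧ (c (n+1) : List ℕ) ≠ (c (n+1+1) : List ℕ)
    have h2 := hF1 (c (n+1)).1 (c (n+1)).2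
    exact ⟨h2.2.1, h2.2.2⟩
  · show InT T (c (n+1) : List ℕ)
    exact (hF1 (c n).1 (c n).2).1

noncomputable def rkT {T : Set (List ℕ)} (h : ¬ HasBranch T) (s : List ℕ) : Ordinal :=
  (acc_of_noBranch h s).rank

lemma rkT_lt {T : Set (List ℕ)} (h : ¬ HasBranch T) {a b : List ℕ}
    (hab : below T a b) : rkT h a < rkT h b := by
  have := Acc.rank_lt_of_rel (acc_of_noBranch h b) hab
  simpa [rkT] using this

lemma rkT_eq {T : Set (List ℕ)} (h : ¬ HasBranch T) (s : List ℕ) :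
    rkT h s = ⨆ b : { b // below T b s }, Order.succ (rkT h b) := by
  rw [rkT, Acc.rank_eq]
  congr 1

lemma exists_below_of_lt {T : Set (List ℕ)} (h : ¬ HasBranch T) {s : List ℕ}
    {o : Ordinal} (ho : o < rkT h s) :
    ∃ b, below T b s ∧ o ≤ rkT h b := by
  rw [rkT_eq] at ho
  rw [Ordinal.lt_iSup_iff] at ho
  obtain ⟨⟨b, hb⟩, hlt⟩ := ho
  exact ⟨b, hb, Order.lt_succ_iff.1 hlt⟩

end Insep

namespace Insep

def IsEmb (S T : Set (List ℕ)) (f : List ℕ → List ℕ) : Prop :=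
  (∀ s, InT S s → InT T (f s)) ∧
  (∀ s t, InT S t → s <+: t → s ≠ t → (f s <+: f t ∧ f s ≠ f t))

def Emb (S T : Set (List ℕ)) : Prop := ∃ f, IsEmb S T f

def SEmb (S T : Set (List ℕ)) : Prop := ∃ f, IsEmb S T f ∧ f [] ≠ []

/-- E1: if `T` has a branch, any `S` strictly embeds -/
lemma sEmb_of_hasBranch {S T : Set (List ℕ)} (h : HasBranch T) : SEmb S T := by
  obtain ⟨z, hz⟩ := h
  refine ⟨fun s => pref z (s.length + 1), ⟨fun s _ => InT_pref hz _, ?_⟩, by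
    intro hcon
    have := congrArg List.length hcon
    simp at this⟩
  · intro s t hIT hst hne
    have hlt : s.length < t.length := by
      rcases lt_or_eq_of_le hst.length_le with h' | h'
      · exact h'
      · exact absurd (hst.eq_of_length h') hne
    constructor
    · exact pref_prefix z (by omega)
    · intro hcon
      have := congrArg List.length hcon
      simp at this; omega

lemma emb_of_hasBranch {S T : Set (List ℕ)} (h : HasBranch T) : Emb S T :=
  (sEmb_of_hasBranch h).imp fun _ hf => hf.1

/-- E2: embeddings transport branches forward -/
lemma hasBranch_of_isEmb {S T : Set (List ℕ)} {f : List ℕ → List ℕ}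
    (hf : IsEmb S T f) (h : HasBranch S) : HasBranch T := by
  obtain ⟨z, hz⟩ := h
  refine hasBranch_of_chain (fun n => f (pref z n)) (fun n => ?_)
    (fun n => hf.1 _ (InT_pref hz n))
  refine hf.2 _ _ (InT_pref hz (n+1)) (pref_prefix z (by omega)) ?_
  intro hcon
  have := congrArg List.length hcon
  simp at this

/-- E3: rank comparison along an embedding -/
lemma rk_le_of_isEmb {S T : Set (List ℕ)} (hS : ¬ HasBranch S) (hT : ¬ HasBranch T)
    {f : List ℕ → List ℕ} (hf : IsEmb S T f) :
    ∀ s, InT S s → rkT hS s ≤ rkT hT (f s) := by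
  intro s
  induction (acc_of_noBranch hS s) with
  | _ s _ IH =>
    intro hs
    rw [rkT_eq]
    apply Ordinal.iSup_le
    rintro ⟨b, hb⟩
    have h1 : rkT hS b ≤ rkT hT (f b) := IH b hb hb.1
    have h2 : rkT hT (f b) < rkT hT (f s) := by
      refine rkT_lt hT ⟨hf.1 b hb.1, ?_, ?_⟩
      · exact (hf.2 s b hb.1 hb.2.1 hb.2.2).1
      · exact fun he => (hf.2 s b hb.1 hb.2.1 hb.2.2).2 he
    exact Order.succ_le_iff.2 (lt_of_le_of_lt h1 h2)

end Insep

namespace Insep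

section construct

variable {S T : Set (List ℕ)} (hS : ¬ HasBranch S) (hT : ¬ HasBranch T)

open Classical in
/-- pick a strict extension of `t` in `T` of rank at least `rkT hS s'` -/
noncomputable def pick (t s' : List ℕ) : List ℕ :=
  if h : ∃ t', below T t' t ∧ rkT hS s' ≤ rkT hT t' then h.choose else []

lemma pick_spec {t s' : List ℕ}
    (h : ∃ t', below T t' t ∧ rkT hS s' ≤ rkT hT t') :
    below T (pick hS hT t s') t ∧ rkT hS s' ≤ rkT hT (pick hS hT t s') := by
  rw [pick, dif_pos h]
  exact h.choose_spec

/-- build the embedding on reversed lists -/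
noncomputable def gEmb (t₀ : List ℕ) : List ℕ → List ℕ
  | [] => t₀
  | k :: r => pick hS hT (gEmb t₀ r) ((k :: r).reverse)

variable {t₀ : List ℕ} (hbase : InT T t₀ ∧ rkT hS [] ≤ rkT hT t₀)

include hbase in
lemma gEmb_inv : ∀ r : List ℕ, InT S r.reverse →
    InT T (gEmb hS hT t₀ r) ∧ rkT hS r.reverse ≤ rkT hT (gEmb hS hT t₀ r) := by
  intro r
  induction r with
  | nil => intro _; simpa [gEmb] using hbase
  | cons k r ih =>
    intro hIn
    have hpre : r.reverse <+: (k :: r).reverse := by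
      rw [List.reverse_cons]; exact ⟨[k], rfl⟩
    have hr : InT S r.reverse := hIn.mono_prefix hpre
    obtain ⟨ih1, ih2⟩ := ih hr
    have hne : r.reverse ≠ (k :: r).reverse := by
      intro hcon
      have := congrArg List.length hcon
      simp at this
    have hlt : rkT hS ((k :: r).reverse) < rkT hT (gEmb hS hT t₀ r) :=
      lt_of_lt_of_le (rkT_lt hS ⟨hIn, hpre, hne⟩) ih2
    have hex := exists_below_of_lt hT hlt
    have := pick_spec hS hT hex
    exact ⟨this.1.1, by simpa [gEmb] using this.2⟩

include hbase in
lemma gEmb_step (k : ℕ) (r : List ℕ) (hIn : InT S ((k :: r).reverse)) :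
    gEmb hS hT t₀ r <+: gEmb hS hT t₀ (k :: r) ∧
      gEmb hS hT t₀ r ≠ gEmb hS hT t₀ (k :: r) := by
  have hpre : r.reverse <+: (k :: r).reverse := by
    rw [List.reverse_cons]; exact ⟨[k], rfl⟩
  have hr : InT S r.reverse := hIn.mono_prefix hpre
  obtain ⟨ih1, ih2⟩ := gEmb_inv hS hT hbase r hr
  have hne : r.reverse ≠ (k :: r).reverse := by
    intro hcon; have := congrArg List.length hcon; simp at this
  have hlt : rkT hS ((k :: r).reverse) < rkT hT (gEmb hS hT t₀ r) :=
    lt_of_lt_of_le (rkT_lt hS ⟨hIn, hpre, hne⟩) ih2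
  have := (pick_spec hS hT (exists_below_of_lt hT hlt)).1
  exact ⟨this.2.1, this.2.2⟩

include hbase in
lemma gEmb_mono : ∀ (u r : List ℕ), u ≠ [] → InT S ((u ++ r).reverse) →
    gEmb hS hT t₀ r <+: gEmb hS hT t₀ (u ++ r) ∧
      (gEmb hS hT t₀ r).length < (gEmb hS hT t₀ (u ++ r)).length := by
  intro u
  induction u with
  | nil => intro r h; exact absurd rfl h
  | cons k u ih =>
    intro r _ hIn
    by_cases hu : u = []
    · subst hu
      have := gEmb_step hS hT hbase k r hIn
      refine ⟨this.1, ?_⟩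
      rcases lt_or_eq_of_le this.1.length_le with h' | h'
      · exact h'
      · exact absurd (this.1.eq_of_length h') this.2
    · have hIn' : InT S ((u ++ r).reverse) := by
        refine hIn.mono_prefix ?_
        rw [show (k :: u) ++ r = k :: (u ++ r) from rfl, List.reverse_cons]
        exact ⟨[k], rfl⟩
      obtain ⟨ih1, ih2⟩ := ih r hu hIn'
      have hstep := gEmb_step hS hT hbase k (u ++ r)
        (by rw [show (k :: u) ++ r = k :: (u ++ r) from rfl] at hIn; exact hIn)
      rw [show (k :: u) ++ r = k :: (u ++ r) from rfl]
      refine ⟨ih1.trans hstep.1, lt_of_lt_of_le ih2 hstep.1.length_le⟩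

include hbase in
/-- E5: from a rank bound, get an embedding with prescribed root image -/
lemma isEmb_of_base : IsEmb S T (fun s => gEmb hS hT t₀ s.reverse) ∧
    gEmb hS hT t₀ ([] : List ℕ).reverse = t₀ := by
  refine ⟨⟨?_, ?_⟩, rfl⟩
  · intro s hs
    have := gEmb_inv hS hT hbase s.reverse (by simpa using hs)
    exact this.1
  · intro s t hIT hst hne
    obtain ⟨u, hu⟩ := hst
    have hune : u ≠ [] := by
      intro h; subst h; simp at hu; exact hne hu
    have : t.reverse = u.reverse ++ s.reverse := by rw [← hu]; simp
    have hm := gEmb_mono hS hT hbase u.reverse s.reverse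
      (by simpa using hune) (by rw [← this]; simpa using hIT)
    show gEmb hS hT t₀ s.reverse <+: gEmb hS hT t₀ t.reverse ∧
      gEmb hS hT t₀ s.reverse ≠ gEmb hS hT t₀ t.reverse
    rw [this]
    exact ⟨hm.1, fun hcon => by rw [hcon] at hm; exact lt_irrefl _ hm.2⟩

end construct

/-- E6: totality -/
lemma emb_or_sEmb (S T : Set (List ℕ)) : Emb S T ∨ SEmb T S := by
  classical
  by_cases hT : HasBranch T
  · exact Or.inl (emb_of_hasBranch hT)
  by_cases hS : HasBranch S
  · exact Or.inr (sEmb_of_hasBranch hS)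
  by_cases hS0 : InT S []
  · by_cases hT0 : InT T []
    · rcases le_or_gt (rkT hS []) (rkT hT []) with hle | hlt
      · obtain ⟨hf, -⟩ := isEmb_of_base hS hT (t₀ := []) ⟨hT0, hle⟩
        exact Or.inl ⟨_, hf⟩
      · obtain ⟨b, hb, hrk⟩ := exists_below_of_lt hS hlt
        obtain ⟨hf, hroot⟩ := isEmb_of_base hT hS (t₀ := b) ⟨hb.1, hrk⟩
        refine Or.inr ⟨_, hf, ?_⟩
        simp only [List.reverse_nil] at hroot ⊢
        rw [hroot]
        exact fun hcon => hb.2.2 hcon.symm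
    · refine Or.inr ⟨fun _ => [0], ⟨?_, ?_⟩, by simp⟩
      · intro s hs
        exact absurd (hs [] (by simp)) (fun h => hT0 (fun p hp => by
          rw [List.prefix_nil.1 hp]; exact h))
      · intro s t ht
        exact absurd (ht [] (by simp)) (fun h => hT0 (fun p hp => by
          rw [List.prefix_nil.1 hp]; exact h))
  · left
    refine ⟨id, fun s hs => ?_, fun s t ht => ?_⟩
    · exact absurd (hs.mono_prefix (by simp : ([]:List ℕ) <+: s)) hS0
    · exact absurd (ht.mono_prefix (by simp : ([]:List ℕ) <+: t)) hS0

end Insep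

namespace Insep

open Encodable

/-- the coding function -/
def cd (i : ℕ) (u s : List ℕ) : ℕ := Encodable.encode (i, u, s)

/-- the `i`-th tree coded by `w`, sectioned at `x` -/
def tre (i : ℕ) (w x : NN) : Set (List ℕ) := {s | w (cd i (pref x s.length) s) = 0}

/-- The two inseparable coanalytic sets in Baire space. -/
def A0 : Set NN := {y | ¬ SEmb (tre 1 y y) (tre 0 y y)}
def A1 : Set NN := {y | ¬ Emb (tre 0 y y) (tre 1 y y)}

lemma A0_disjoint_A1 : Disjoint A0 A1 := by
  rw [Set.disjoint_left]
  intro y h0 h1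
  rcases emb_or_sEmb (tre 0 y y) (tre 1 y y) with h | h
  · exact h1 h
  · exact h0 h

/-! ### continuity helpers -/

lemma continuous_eval_pref {Z : Type*} [TopologicalSpace Z] (π : Z → NN) (hπ : Continuous π)
    (c : List ℕ → ℕ) (n : ℕ) : Continuous fun z : Z => (π z) (c (pref (π z) n)) := by
  have : Continuous fun y : NN => y (c (pref y n)) := by
    apply IsLocallyConstant.continuous
    intro U
    rw [isOpen_iff_forall_mem_open]
    intro y₀ hy₀
    set m := max n (c (pref y₀ n) + 1) with hm
    refine ⟨⋂ i ∈ Finset.range m, {y : NN | y i = y₀ i}, ?_, ?_, ?_⟩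
    · intro y hy
      simp only [Set.mem_iInter, Finset.mem_range, Set.mem_setOf_eq] at hy
      have hpref : pref y n = pref y₀ n := by
        apply List.ext_getElem (by simp)
        intro k h1 h2
        have hk : k < n := by simpa using h1
        rw [pref_getElem _ hk, pref_getElem _ hk]
        exact hy k (by omega)
      have : y (c (pref y n)) = y₀ (c (pref y₀ n)) := by
        rw [hpref]; exact hy _ (by omega)
      simpa [Set.mem_preimage, this] using hy₀
    · refine isOpen_biInter_finset fun i _ => ?_
      have : {y : NN | y i = y₀ i} = (fun y : NN => y i) ⁻¹' {y₀ i} := rfl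
      rw [this]
      exact (isOpen_discrete _).preimage (continuous_apply i)
    · simp
  exact this.comp hπ

lemma isClopen_of_continuous_nat {Z : Type*} [TopologicalSpace Z] {g : Z → ℕ}
    (hg : Continuous g) (k : ℕ) : IsClopen {z | g z = k} := by
  have : {z | g z = k} = g ⁻¹' {k} := rfl
  rw [this]
  exact ⟨(isClosed_discrete _).preimage hg, (isOpen_discrete _).preimage hg⟩

lemma isClopen_bind {Z : Type*} [TopologicalSpace Z] {g : Z → ℕ}
    (hg : Continuous g) (P : ℕ → Set Z) (hP : ∀ m, IsClopen (P m)) :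
    IsClopen {z | z ∈ P (g z)} := by
  constructor
  · rw [← isOpen_compl_iff]
    have : {z | z ∈ P (g z)}ᶜ = ⋃ m, {z | g z = m} ∩ (P m)ᶜ := by
      ext z
      simp only [Set.mem_compl_iff, Set.mem_setOf_eq, Set.mem_iUnion, Set.mem_inter_iff]
      constructor
      · intro h; exact ⟨g z, rfl, h⟩
      · rintro ⟨m, rfl, h⟩; exact h
    rw [this]
    exact isOpen_iUnion fun m => ((isClopen_of_continuous_nat hg m).2).inter (hP m).compl.2
  · have : {z | z ∈ P (g z)} = ⋃ m, {z | g z = m} ∩ P m := by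
      ext z
      simp only [Set.mem_setOf_eq, Set.mem_iUnion, Set.mem_inter_iff]
      constructor
      · intro h; exact ⟨g z, rfl, h⟩
      · rintro ⟨m, rfl, h⟩; exact h
    rw [this]
    exact isOpen_iUnion fun m => ((isClopen_of_continuous_nat hg m).2).inter (hP m).2

end Insep

namespace Insep

open Encodable Denumerable

noncomputable def Fapp (f : NN) (s : List ℕ) : List ℕ :=
  Denumerable.ofNat (List ℕ) (f (Encodable.encode s))

def memTreSet (i : ℕ) (p : List ℕ) : Set NN := {y | p ∈ tre i y y}

lemma isClopen_memTreSet (i : ℕ) (p : List ℕ) : IsClopen (memTreSet i p) := by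
  have : memTreSet i p = {y : NN | (fun y : NN => y (cd i (pref y p.length) p)) y = 0} := rfl
  rw [this]
  exact isClopen_of_continuous_nat
    (continuous_eval_pref id continuous_id (fun u => cd i u p) p.length) 0

def InTSet (i : ℕ) (t : List ℕ) : Set NN := {y | InT (tre i y y) t}

lemma isClopen_InTSet (i : ℕ) (t : List ℕ) : IsClopen (InTSet i t) := by
  have : InTSet i t = ⋂ p ∈ t.inits.toFinset, memTreSet i p := by
    ext y
    simp only [InTSet, Set.mem_setOf_eq, Set.mem_iInter, List.mem_toFinset, List.mem_inits,
      memTreSet, InT]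
    try exact ⟨fun h p hp => h p hp, fun h p hp => h p hp⟩
  rw [this]
  exact isClopen_biInter_finset fun p _ => isClopen_memTreSet i p

abbrev W := NN × NN

instance : PolishSpace W := inferInstance

def fstInT (i : ℕ) (t : List ℕ) : Set W := Prod.fst ⁻¹' InTSet i t

lemma isClopen_fstInT (i : ℕ) (t : List ℕ) : IsClopen (fstInT i t) :=
  (isClopen_InTSet i t).preimage continuous_fst

lemma continuous_evf (s : List ℕ) : Continuous fun w : W => w.2 (Encodable.encode s) :=
  (continuous_apply _).comp continuous_snd

def mixSet (b : ℕ) (s : List ℕ) : Set W := {w | InT (tre b w.1 w.1) (Fapp w.2 s)}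

lemma isClopen_mixSet (b : ℕ) (s : List ℕ) : IsClopen (mixSet b s) := by
  have := isClopen_bind (continuous_evf s)
    (fun m => Prod.fst ⁻¹' InTSet b (Denumerable.ofNat (List ℕ) m))
    (fun m => (isClopen_InTSet b _).preimage continuous_fst)
  exact this

open Classical in
def monoSet (s t : List ℕ) : Set W :=
  {w | Fapp w.2 s <+: Fapp w.2 t ∧ Fapp w.2 s ≠ Fapp w.2 t}

lemma isClopen_monoSet (s t : List ℕ) : IsClopen (monoSet s t) := by
  classical
  have := isClopen_bind (continuous_evf s)
    (fun m => {w : W | Denumerable.ofNat (List ℕ) m <+: Fapp w.2 t ∧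
      Denumerable.ofNat (List ℕ) m ≠ Fapp w.2 t})
    (fun m => by
      have := isClopen_bind (continuous_evf t)
        (fun m' => if (Denumerable.ofNat (List ℕ) m <+: Denumerable.ofNat (List ℕ) m' ∧
            Denumerable.ofNat (List ℕ) m ≠ Denumerable.ofNat (List ℕ) m')
          then (Set.univ : Set W) else ∅)
        (fun m' => by split <;> simp [isClopen_univ, isClopen_empty])
      convert this using 1
      ext w
      by_cases h : (Denumerable.ofNat (List ℕ) m <+: Fapp w.2 t ∧
          Denumerable.ofNat (List ℕ) m ≠ Fapp w.2 t) <;>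
        simp [Set.mem_setOf_eq, Fapp, h])
  exact this

def rootSet : Set W := {w | Fapp w.2 [] ≠ []}

lemma isClopen_rootSet : IsClopen rootSet := by
  classical
  have := isClopen_bind (continuous_evf [])
    (fun m => if Denumerable.ofNat (List ℕ) m ≠ [] then (Set.univ : Set W) else ∅)
    (fun m => by split <;> simp [isClopen_univ, isClopen_empty])
  convert this using 1
  ext w
  by_cases h : Fapp w.2 [] ≠ [] <;> simp [rootSet, Fapp, h] at * <;> simp [h]

end Insep

namespace Insep

open Encodable Denumerable

def CEmb (a b : ℕ) : Set W := {w | IsEmb (tre a w.1 w.1) (tre b w.1 w.1) (Fapp w.2)}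

lemma CEmb_eq (a b : ℕ) : CEmb a b =
    (⋂ s : List ℕ, (fstInT a s)ᶜ ∪ mixSet b s) ∩
    (⋂ q : List ℕ × List ℕ,
      {w : W | (q.1 <+: q.2 ∧ q.1 ≠ q.2 ∧ w ∈ fstInT a q.2) → w ∈ monoSet q.1 q.2}) := by
  ext w
  simp only [CEmb, Set.mem_setOf_eq, Set.mem_inter_iff, Set.mem_iInter, Set.mem_union,
    Set.mem_compl_iff, IsEmb, fstInT, Set.mem_preimage, InTSet, Set.mem_setOf_eq,
    mixSet, monoSet]
  constructor
  · rintro ⟨h1, h2⟩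
    refine ⟨fun s => ?_, fun q => ?_⟩
    · by_cases h : InT (tre a w.1 w.1) s
      · exact Or.inr (h1 s h)
      · exact Or.inl h
    · rintro ⟨hp, hne, hIn⟩
      exact h2 q.1 q.2 hIn hp hne
  · rintro ⟨h1, h2⟩
    constructor
    · intro s hs
      rcases h1 s with h | h
      · exact absurd hs h
      · exact h
    · intro s t hIn hp hne
      exact h2 (s, t) ⟨hp, hne, hIn⟩

lemma isClosed_CEmb (a b : ℕ) : IsClosed (CEmb a b) := by
  rw [CEmb_eq]
  apply IsClosed.inter
  · exact isClosed_iInter fun s =>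
      ((isClopen_fstInT a s).compl.union (isClopen_mixSet b s)).1
  · refine isClosed_iInter fun q => ?_
    classical
    by_cases h : q.1 <+: q.2 ∧ q.1 ≠ q.2
    · have : {w : W | (q.1 <+: q.2 ∧ q.1 ≠ q.2 ∧ w ∈ fstInT a q.2) → w ∈ monoSet q.1 q.2}
          = (fstInT a q.2)ᶜ ∪ monoSet q.1 q.2 := by
        ext w
        simp only [Set.mem_setOf_eq, Set.mem_union, Set.mem_compl_iff]
        constructor
        · intro hw
          by_cases hw2 : w ∈ fstInT a q.2
          · exact Or.inr (hw ⟨h.1, h.2, hw2⟩)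
          · exact Or.inl hw2
        · rintro (hw | hw) ⟨_, _, hIn⟩
          · exact absurd hIn hw
          · exact hw
      rw [this]
      exact ((isClopen_fstInT a q.2).compl.union (isClopen_monoSet q.1 q.2)).1
    · have : {w : W | (q.1 <+: q.2 ∧ q.1 ≠ q.2 ∧ w ∈ fstInT a q.2) → w ∈ monoSet q.1 q.2}
          = Set.univ := by
        ext w
        simp only [Set.mem_setOf_eq, Set.mem_univ, iff_true]
        rintro ⟨h1, h2, -⟩
        exact absurd ⟨h1, h2⟩ h
      rw [this]
      exact isClosed_univ

lemma fst_image_CEmb (a b : ℕ) :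
    Prod.fst '' (CEmb a b) = {y | Emb (tre a y y) (tre b y y)} := by
  ext y
  constructor
  · rintro ⟨w, hw, rfl⟩
    exact ⟨Fapp w.2, hw⟩
  · rintro ⟨F, hF⟩
    refine ⟨(y, fun n => Encodable.encode (F (Denumerable.ofNat (List ℕ) n))), ?_, rfl⟩
    have : Fapp (fun n => Encodable.encode (F (Denumerable.ofNat (List ℕ) n))) = F := by
      funext s
      simp [Fapp, Denumerable.ofNat_encode]
    show IsEmb _ _ (Fapp _)
    rw [this]
    exact hF

lemma fst_image_CSEmb (a b : ℕ) :
    Prod.fst '' (CEmb a b ∩ rootSet) = {y | SEmb (tre a y y) (tre b y y)} := by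
  ext y
  constructor
  · rintro ⟨w, ⟨hw, hroot⟩, rfl⟩
    exact ⟨Fapp w.2, hw, hroot⟩
  · rintro ⟨F, hF, hroot⟩
    refine ⟨(y, fun n => Encodable.encode (F (Denumerable.ofNat (List ℕ) n))), ⟨?_, ?_⟩, rfl⟩
    · have : Fapp (fun n => Encodable.encode (F (Denumerable.ofNat (List ℕ) n))) = F := by
        funext s
        simp [Fapp, Denumerable.ofNat_encode]
      show IsEmb _ _ (Fapp _)
      rw [this]
      exact hF
    · show Fapp _ [] ≠ []
      simpa [Fapp, Denumerable.ofNat_encode] using hroot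

open MeasureTheory in
lemma analyticSet_A0_compl : AnalyticSet (A0ᶜ) := by
  have h1 : (A0ᶜ : Set NN) = Prod.fst '' (CEmb 1 0 ∩ rootSet) := by
    rw [fst_image_CSEmb]
    ext y
    simp [A0]
  rw [h1]
  exact (((isClosed_CEmb 1 0).inter isClopen_rootSet.1).analyticSet).image_of_continuous
    continuous_fst

open MeasureTheory in
lemma analyticSet_A1_compl : AnalyticSet (A1ᶜ) := by
  have h1 : (A1ᶜ : Set NN) = Prod.fst '' (CEmb 0 1) := by
    rw [fst_image_CEmb]
    ext y
    simp [A1]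
  rw [h1]
  exact ((isClosed_CEmb 0 1).analyticSet).image_of_continuous continuous_fst

end Insep

namespace Insep

open MeasureTheory Encodable

/-- every analytic set in Baire space is the projection of a closed subset of the plane -/
lemma exists_closed_proj {A : Set NN} (hA : AnalyticSet A) :
    ∃ F : Set (NN × NN), IsClosed F ∧ A = {x | ∃ z, (x, z) ∈ F} := by
  rw [AnalyticSet] at hA
  rcases hA with rfl | ⟨g, hg, rfl⟩
  · exact ⟨∅, isClosed_empty, by simp⟩
  · refine ⟨{w : NN × NN | g w.2 = w.1}, ?_, ?_⟩
    · exact isClosed_eq (hg.comp continuous_snd) continuous_fst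
    · ext x
      simp [Set.range, eq_comm]

open Classical in
/-- the code of a pair of closed sets -/
noncomputable def codeOf (F₀ F₁ : Set (NN × NN)) : NN := fun n =>
  match (Encodable.decode (α := ℕ × List ℕ × List ℕ) n) with
  | some (i, u, s) =>
      if (∃ w ∈ (if i = 0 then F₀ else F₁), pref w.1 s.length = u ∧ pref w.2 s.length = s)
      then 0 else 1
  | none => 1

lemma codeOf_mem {F₀ F₁ : Set (NN × NN)} {i : ℕ} {x : NN} {s : List ℕ} :
    s ∈ tre i (codeOf F₀ F₁) x ↔
      ∃ w ∈ (if i = 0 then F₀ else F₁),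
        pref w.1 s.length = pref x s.length ∧ pref w.2 s.length = s := by
  classical
  have hdec : Encodable.decode (α := ℕ × List ℕ × List ℕ)
      (cd i (pref x s.length) s) = some (i, pref x s.length, s) := Encodable.encodek _
  simp only [tre, Set.mem_setOf_eq, codeOf, hdec]
  split
  · simp
  · simp

/-- key property: branches of coded trees recover the projection -/
lemma hasBranch_codeOf {F₀ F₁ : Set (NN × NN)} (h₀ : IsClosed F₀) (h₁ : IsClosed F₁)
    {i : ℕ} (x : NN) :
    HasBranch (tre i (codeOf F₀ F₁) x) ↔
      ∃ z, (x, z) ∈ (if i = 0 then F₀ else F₁) := by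
  classical
  set F := if i = 0 then F₀ else F₁ with hF
  have hFc : IsClosed F := by rw [hF]; split <;> assumption
  constructor
  · rintro ⟨z, hz⟩
    have key : ∀ n, ∃ w ∈ F, pref w.1 n = pref x n ∧ pref w.2 n = pref z n := by
      intro n
      have := (codeOf_mem (F₀ := F₀) (F₁ := F₁) (i := i) (x := x) (s := pref z n)).1 (hz n)
      simpa using this
    choose wseq hw1 hw2 hw3 using key
    refine ⟨z, ?_⟩
    have htend : Filter.Tendsto wseq Filter.atTop (nhds (x, z)) := by
      rw [nhds_prod_eq]
      refine Filter.Tendsto.prodMk ?_ ?_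
      · rw [tendsto_pi_nhds]
        intro k
        apply Filter.Tendsto.congr' (f₁ := fun _ => x k)
        · filter_upwards [Filter.eventually_ge_atTop (k + 1)] with n hn
          have := hw2 n
          have hk : k < n := by omega
          have := congrArg (fun l => l.getD k 0) this
          simpa [List.getD_eq_getElem, pref_length, hk, pref_getElem _ hk] using this.symm
        · exact tendsto_const_nhds
      · rw [tendsto_pi_nhds]
        intro k
        apply Filter.Tendsto.congr' (f₁ := fun _ => z k)
        · filter_upwards [Filter.eventually_ge_atTop (k + 1)] with n hn
          have := hw3 n
          have hk : k < n := by omega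
          have := congrArg (fun l => l.getD k 0) this
          simpa [List.getD_eq_getElem, pref_length, hk, pref_getElem _ hk] using this.symm
        · exact tendsto_const_nhds
    exact hFc.mem_of_tendsto htend (Filter.Eventually.of_forall hw1)
  · rintro ⟨z, hz⟩
    refine ⟨z, fun n => ?_⟩
    rw [codeOf_mem]
    exact ⟨(x, z), by rw [← hF]; exact hz, by simp, by simp⟩

/-- Inseparability in Baire space -/
theorem not_separable : ¬∃ B : Set NN, MeasurableSet B ∧ A0 ⊆ B ∧ A1 ⊆ Bᶜ := by
  rintro ⟨B, hB, h0, h1⟩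
  have hBa : AnalyticSet B := hB.analyticSet
  have hBca : AnalyticSet Bᶜ := hB.compl.analyticSet
  obtain ⟨F₀, hF₀, hBF₀⟩ := exists_closed_proj hBa
  obtain ⟨F₁, hF₁, hBF₁⟩ := exists_closed_proj hBca
  set y := codeOf F₀ F₁ with hy
  have htre0 : ∀ x, HasBranch (tre 0 y x) ↔ x ∈ B := by
    intro x
    rw [hy, hasBranch_codeOf hF₀ hF₁]
    simp only [if_pos rfl]
    rw [hBF₀]; rfl
  have htre1 : ∀ x, HasBranch (tre 1 y x) ↔ x ∈ Bᶜ := by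
    intro x
    rw [hy, hasBranch_codeOf hF₀ hF₁]
    simp only [if_neg (by norm_num : (1:ℕ) ≠ 0)]
    rw [hBF₁]; rfl
  by_cases hyB : y ∈ B
  · -- tre 0 has a branch, tre 1 does not
    have hb0 : HasBranch (tre 0 y y) := (htre0 y).2 hyB
    have hb1 : ¬ HasBranch (tre 1 y y) := fun h => ((htre1 y).1 h) hyB
    have : y ∈ A1 := by
      intro hEmb
      obtain ⟨f, hf⟩ := hEmb
      exact hb1 (hasBranch_of_isEmb hf hb0)
    exact (h1 this) hyB
  · have hb1 : HasBranch (tre 1 y y) := (htre1 y).2 hyB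
    have hb0 : ¬ HasBranch (tre 0 y y) := fun h => hyB ((htre0 y).1 h)
    have : y ∈ A0 := by
      intro hSEmb
      obtain ⟨f, hf, -⟩ := hSEmb
      exact hb0 (hasBranch_of_isEmb hf hb1)
    exact hyB (h0 this)

end Insep

namespace Insep

open MeasureTheory

lemma not_countable_NN : ¬ Countable NN := by
  intro h
  have : Nonempty NN := ⟨fun _ => 0⟩
  obtain ⟨g, hg⟩ := exists_surjective_nat NN
  obtain ⟨m, hm⟩ := hg (fun n => g n n + 1)
  have := congrFun hm m
  omega

end Insep

namespace Insep

open MeasureTheory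

lemma analytic_image_of_measurableEquiv {X : Type} [TopologicalSpace X] [PolishSpace X]
    [MeasurableSpace X] [BorelSpace X] (e : NN ≃ᵐ X) {S : Set NN} (hS : AnalyticSet S) :
    AnalyticSet (e '' S) := by
  rw [AnalyticSet] at hS
  rcases hS with rfl | ⟨g, hg, rfl⟩
  · simpa using analyticSet_empty
  · rw [← Set.range_comp]
    have hf : Measurable (⇑e ∘ g) := e.measurable.comp hg.measurable
    obtain ⟨t', ht', hcont, hpolish⟩ := hf.exists_continuous
    exact @analyticSet_range_of_polishSpace X _ NN t' hpolish _ hcont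

end Insep

open MeasureTheory

/-- In any uncountable standard Borel (Polish) space there exist disjoint
co-analytic sets `A₀, A₁` that are Borel-inseparable: no Borel set contains
`A₀` and is disjoint from `A₁`. -/
theorem stmt9 (X : Type) [TopologicalSpace X] [PolishSpace X]
    [MeasurableSpace X] [BorelSpace X] (hX : ¬Countable X) :
    ∃ A₀ A₁ : Set X, AnalyticSet A₀ᶜ ∧ AnalyticSet A₁ᶜ ∧ Disjoint A₀ A₁ ∧
      ¬∃ B : Set X, MeasurableSet B ∧ A₀ ⊆ B ∧ A₁ ⊆ Bᶜ := by
  classical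
  obtain e : Insep.NN ≃ᵐ X :=
    PolishSpace.measurableEquivOfNotCountable Insep.not_countable_NN hX
  refine ⟨e '' Insep.A0, e '' Insep.A1, ?_, ?_, ?_, ?_⟩
  · have : (⇑e '' Insep.A0)ᶜ = ⇑e '' Insep.A0ᶜ := by
      rw [Set.image_compl_eq e.bijective]
    rw [this]
    exact Insep.analytic_image_of_measurableEquiv e Insep.analyticSet_A0_compl
  · have : (⇑e '' Insep.A1)ᶜ = ⇑e '' Insep.A1ᶜ := by
      rw [Set.image_compl_eq e.bijective]
    rw [this]
    exact Insep.analytic_image_of_measurableEquiv e Insep.analyticSet_A1_compl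
  · exact (Set.disjoint_image_iff e.injective).2 Insep.A0_disjoint_A1
  · rintro ⟨B, hB, h0, h1⟩
    apply Insep.not_separable
    refine ⟨e ⁻¹' B, e.measurable hB, ?_, ?_⟩
    · intro x hx
      exact h0 (Set.mem_image_of_mem _ hx)
    · intro x hx
      exact h1 (Set.mem_image_of_mem _ hx)
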